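/- Let A be a real n×n matrix, B a real n×m matrix, W a symmetric positive definite n×n matrix, and let K*, K̃ be m×n matrices. Suppose ‖A − BK*‖_W < 1 and ‖K̃ − K*‖ · ‖B‖ · √(‖W‖·‖W⁻¹‖) < 1 − ‖A − BK*‖_W. Then ‖A − BK̃‖_W < 1, and consequently the spectral radius satisfies ρ(A − BK̃) < 1, i.e., K̃ is a stabilizing policy. (This is the precise form of the stability certificate: any policy sufficiently close to a policy whose closed loop contracts in the W-induced norm is itself stabilizing.) -/

import Mathlib

open Matrix Finset

/-- Spectral norm of a real matrix: the operator norm with respect to the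
Euclidean norms on the domain and codomain. -/
noncomputable def specNorm {p q : ℕ} (M : Matrix (Fin p) (Fin q) ℝ) : ℝ :=
  ‖LinearMap.toContinuousLinearMap (Matrix.toEuclideanLin M)‖

/-- Spectral radius of a real square matrix: the largest modulus of a
(complex) eigenvalue. -/
noncomputable def specRad {p : ℕ} (M : Matrix (Fin p) (Fin p) ℝ) : ℝ :=
  sSup {r : ℝ | ∃ μ ∈ spectrum ℂ (M.map (algebraMap ℝ ℂ)), r = ‖μ‖}

/-- Smallest (real) eigenvalue of a square matrix. -/
noncomputable def lambdaMin {p : ℕ} (S : Matrix (Fin p) (Fin p) ℝ) : ℝ :=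
  sInf {r : ℝ | ∃ v : Fin p → ℝ, v ≠ 0 ∧ S.mulVec v = r • v}

/-- `W`-induced norm of `M`: `sup_{z ≠ 0} √((zᵀMᵀWMz)/(zᵀWz))`. -/
noncomputable def winducedNorm {p : ℕ} (W M : Matrix (Fin p) (Fin p) ℝ) : ℝ :=
  sSup {r : ℝ | ∃ z : Fin p → ℝ, z ≠ 0 ∧
    r = Real.sqrt ((z ⬝ᵥ (Mᵀ * W * M).mulVec z) / (z ⬝ᵥ W.mulVec z))}

/-- `W`-relative bound of a symmetric matrix `X`: `sup_{z ≠ 0} (zᵀXz)/(zᵀWz)`. -/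
noncomputable def wrelBound {p : ℕ} (W X : Matrix (Fin p) (Fin p) ℝ) : ℝ :=
  sSup {r : ℝ | ∃ z : Fin p → ℝ, z ≠ 0 ∧
    r = (z ⬝ᵥ X.mulVec z) / (z ⬝ᵥ W.mulVec z)}

/-- Frobenius norm of a real matrix. -/
noncomputable def frobNorm {p q : ℕ} (M : Matrix (Fin p) (Fin q) ℝ) : ℝ :=
  Real.sqrt (∑ i, ∑ j, (M i j) ^ 2)


open scoped MatrixOrder

/-- Square root of a positive semidefinite real matrix. -/
noncomputable def Matrix.PosSemidef.sqrt {p : ℕ} {A : Matrix (Fin p) (Fin p) ℝ}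
    (_hA : A.PosSemidef) : Matrix (Fin p) (Fin p) ℝ :=
  CFC.sqrt A

theorem Matrix.PosSemidef.posSemidef_sqrt {p : ℕ} {A : Matrix (Fin p) (Fin p) ℝ}
    (hA : A.PosSemidef) : hA.sqrt.PosSemidef :=
  (CFC.sqrt_nonneg A).posSemidef

theorem Matrix.PosSemidef.sqrt_mul_self {p : ℕ} {A : Matrix (Fin p) (Fin p) ℝ}
    (hA : A.PosSemidef) : hA.sqrt * hA.sqrt = A :=
  CFC.sqrt_mul_sqrt_self A hA.nonneg

namespace StabCert

/-- Euclidean norm of a plain vector. -/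
noncomputable def en {p : ℕ} (z : Fin p → ℝ) : ℝ := Real.sqrt (z ⬝ᵥ z)

lemma dp_self_nonneg {p : ℕ} (z : Fin p → ℝ) : 0 ≤ z ⬝ᵥ z :=
  Finset.sum_nonneg fun _ _ => mul_self_nonneg _

lemma en_nonneg {p : ℕ} (z : Fin p → ℝ) : 0 ≤ en z := Real.sqrt_nonneg _

lemma en_sq {p : ℕ} (z : Fin p → ℝ) : en z ^ 2 = z ⬝ᵥ z :=
  Real.sq_sqrt (dp_self_nonneg z)

lemma dp_eq_inner {p : ℕ} (x y : Fin p → ℝ) :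
    x ⬝ᵥ y = inner ℝ ((WithLp.equiv 2 (Fin p → ℝ)).symm x)
      ((WithLp.equiv 2 (Fin p → ℝ)).symm y) := by
  rw [PiLp.inner_apply]; exact Finset.sum_congr rfl fun i _ => by simp [mul_comm]

lemma en_eq_norm {p : ℕ} (z : Fin p → ℝ) :
    en z = ‖(WithLp.equiv 2 (Fin p → ℝ)).symm z‖ := by
  rw [en, dp_eq_inner, real_inner_self_eq_norm_sq, Real.sqrt_sq (norm_nonneg _)]

lemma en_pos {p : ℕ} {z : Fin p → ℝ} (hz : z ≠ 0) : 0 < en z := by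
  rw [en, Real.sqrt_pos]
  rcases lt_or_eq_of_le (dp_self_nonneg z) with h | h
  · exact h
  · exact absurd (dotProduct_self_eq_zero.mp h.symm) hz

lemma en_add_le {p : ℕ} (u w : Fin p → ℝ) : en (u + w) ≤ en u + en w := by
  rw [en_eq_norm, en_eq_norm, en_eq_norm]; exact norm_add_le _ _

lemma en_mulVec_le {p q : ℕ} (M : Matrix (Fin p) (Fin q) ℝ) (z : Fin q → ℝ) :
    en (M *ᵥ z) ≤ specNorm M * en z := by
  rw [en_eq_norm, en_eq_norm]
  exact (LinearMap.toContinuousLinearMap (Matrix.toEuclideanLin M)).le_opNorm _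

lemma quad_le {p : ℕ} (M : Matrix (Fin p) (Fin p) ℝ) (x : Fin p → ℝ) :
    x ⬝ᵥ M *ᵥ x ≤ specNorm M * en x ^ 2 := by
  have h := real_inner_le_norm ((WithLp.equiv 2 (Fin p → ℝ)).symm x)
      ((WithLp.equiv 2 (Fin p → ℝ)).symm (M *ᵥ x))
  rw [← dp_eq_inner, ← en_eq_norm, ← en_eq_norm] at h
  calc x ⬝ᵥ M *ᵥ x ≤ en x * en (M *ᵥ x) := h
    _ ≤ en x * (specNorm M * en x) :=
      mul_le_mul_of_nonneg_left (en_mulVec_le M x) (en_nonneg x)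
    _ = specNorm M * en x ^ 2 := by ring

lemma specNorm_nonneg {p q : ℕ} (M : Matrix (Fin p) (Fin q) ℝ) : 0 ≤ specNorm M :=
  norm_nonneg _

lemma specNorm_neg {p q : ℕ} (M : Matrix (Fin p) (Fin q) ℝ) :
    specNorm (-M) = specNorm M := by
  unfold specNorm; rw [map_neg, map_neg, norm_neg]

section S
variable {n : ℕ} {W : Matrix (Fin n) (Fin n) ℝ}

lemma symm_sq_dp {C : Matrix (Fin n) (Fin n) ℝ} (hC : Cᵀ = C) (u : Fin n → ℝ) :
    u ⬝ᵥ (C * C) *ᵥ u = (C *ᵥ u) ⬝ᵥ (C *ᵥ u) := by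
  rw [← mulVec_mulVec, dotProduct_mulVec]
  congr 1
  nth_rewrite 1 [← hC]
  rw [vecMul_transpose]

lemma sqrt_symm (hW : W.PosDef) : hW.posSemidef.sqrtᵀ = hW.posSemidef.sqrt := by
  have h := hW.posSemidef.posSemidef_sqrt.1
  have h2 : hW.posSemidef.sqrtᵀ = hW.posSemidef.sqrtᴴ := by
    ext i j; simp [conjTranspose_apply]
  rw [h2, h]

lemma qW_eq (hW : W.PosDef) (u : Fin n → ℝ) :
    u ⬝ᵥ W *ᵥ u = en (hW.posSemidef.sqrt *ᵥ u) ^ 2 := by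
  rw [en_sq, ← symm_sq_dp (sqrt_symm hW) u, hW.posSemidef.sqrt_mul_self]

lemma sqrt_ker (hW : W.PosDef) {z : Fin n → ℝ} (h : hW.posSemidef.sqrt *ᵥ z = 0) :
    z = 0 := by
  by_contra hz
  have h2 := hW.dotProduct_mulVec_pos hz
  rw [star_trivial, qW_eq hW, en, h] at h2
  simp at h2

lemma en_S_pos (hW : W.PosDef) {z : Fin n → ℝ} (hz : z ≠ 0) :
    0 < en (hW.posSemidef.sqrt *ᵥ z) :=
  en_pos fun h => hz (sqrt_ker hW h)

lemma sqrt_det_ne (hW : W.PosDef) : (hW.posSemidef.sqrt).det ≠ 0 := by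
  intro h
  obtain ⟨v, hv, hv0⟩ := (Matrix.exists_mulVec_eq_zero_iff).mpr h
  exact hv (sqrt_ker hW hv0)

lemma winv_eq (hW : W.PosDef) :
    W⁻¹ = hW.posSemidef.sqrt⁻¹ * hW.posSemidef.sqrt⁻¹ := by
  have h := Matrix.mul_inv_rev hW.posSemidef.sqrt hW.posSemidef.sqrt
  rw [hW.posSemidef.sqrt_mul_self] at h
  exact h

lemma sqrt_inv_symm (hW : W.PosDef) :
    (hW.posSemidef.sqrt⁻¹)ᵀ = hW.posSemidef.sqrt⁻¹ := by
  rw [Matrix.transpose_nonsing_inv, sqrt_symm hW]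

lemma nz_bound (hW : W.PosDef) (z : Fin n → ℝ) :
    en z ^ 2 ≤ specNorm W⁻¹ * en (hW.posSemidef.sqrt *ᵥ z) ^ 2 := by
  set S := hW.posSemidef.sqrt with hS
  have hz : z = S⁻¹ *ᵥ (S *ᵥ z) := by
    rw [mulVec_mulVec,
      Matrix.nonsing_inv_mul _ (isUnit_iff_ne_zero.mpr (sqrt_det_ne hW)), one_mulVec]
  calc en z ^ 2 = z ⬝ᵥ z := en_sq z
    _ = (S⁻¹ *ᵥ (S *ᵥ z)) ⬝ᵥ (S⁻¹ *ᵥ (S *ᵥ z)) := by rw [← hz]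
    _ = (S *ᵥ z) ⬝ᵥ (S⁻¹ * S⁻¹) *ᵥ (S *ᵥ z) := (symm_sq_dp (sqrt_inv_symm hW) _).symm
    _ = (S *ᵥ z) ⬝ᵥ W⁻¹ *ᵥ (S *ᵥ z) := by rw [← winv_eq hW]
    _ ≤ specNorm W⁻¹ * en (S *ᵥ z) ^ 2 := quad_le _ _

lemma en_z_le (hW : W.PosDef) (z : Fin n → ℝ) :
    en z ≤ Real.sqrt (specNorm W⁻¹) * en (hW.posSemidef.sqrt *ᵥ z) := by
  calc en z = Real.sqrt (en z ^ 2) := (Real.sqrt_sq (en_nonneg _)).symm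
    _ ≤ Real.sqrt (specNorm W⁻¹ * en (hW.posSemidef.sqrt *ᵥ z) ^ 2) :=
      Real.sqrt_le_sqrt (nz_bound hW z)
    _ = _ := by rw [Real.sqrt_mul (specNorm_nonneg _), Real.sqrt_sq (en_nonneg _)]

lemma qW_le (hW : W.PosDef) (u : Fin n → ℝ) :
    en (hW.posSemidef.sqrt *ᵥ u) ≤ Real.sqrt (specNorm W) * en u := by
  have h : en (hW.posSemidef.sqrt *ᵥ u) ^ 2 ≤ specNorm W * en u ^ 2 := by
    rw [← qW_eq hW]; exact quad_le _ _
  calc en (hW.posSemidef.sqrt *ᵥ u) = Real.sqrt (en (hW.posSemidef.sqrt *ᵥ u) ^ 2) :=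
      (Real.sqrt_sq (en_nonneg _)).symm
    _ ≤ Real.sqrt (specNorm W * en u ^ 2) := Real.sqrt_le_sqrt h
    _ = _ := by rw [Real.sqrt_mul (specNorm_nonneg _), Real.sqrt_sq (en_nonneg _)]

lemma elem_eq (hW : W.PosDef) (M : Matrix (Fin n) (Fin n) ℝ) {z : Fin n → ℝ} (hz : z ≠ 0) :
    Real.sqrt ((z ⬝ᵥ (Mᵀ * W * M).mulVec z) / (z ⬝ᵥ W.mulVec z))
      = en (hW.posSemidef.sqrt *ᵥ (M *ᵥ z)) / en (hW.posSemidef.sqrt *ᵥ z) := by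
  have hnum : z ⬝ᵥ (Mᵀ * W * M) *ᵥ z = en (hW.posSemidef.sqrt *ᵥ (M *ᵥ z)) ^ 2 := by
    rw [← qW_eq hW, ← mulVec_mulVec, ← mulVec_mulVec, dotProduct_mulVec, vecMul_transpose]
  have hden : z ⬝ᵥ W *ᵥ z = en (hW.posSemidef.sqrt *ᵥ z) ^ 2 := qW_eq hW z
  rw [hnum, hden, Real.sqrt_div (sq_nonneg _), Real.sqrt_sq (en_nonneg _),
    Real.sqrt_sq (en_nonneg _)]

lemma key_bound (hW : W.PosDef) (M : Matrix (Fin n) (Fin n) ℝ) (z : Fin n → ℝ) :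
    en (hW.posSemidef.sqrt *ᵥ (M *ᵥ z))
      ≤ (Real.sqrt (specNorm W) * specNorm M * Real.sqrt (specNorm W⁻¹))
        * en (hW.posSemidef.sqrt *ᵥ z) := by
  calc en (hW.posSemidef.sqrt *ᵥ (M *ᵥ z)) ≤ Real.sqrt (specNorm W) * en (M *ᵥ z) :=
      qW_le hW _
    _ ≤ Real.sqrt (specNorm W) * (specNorm M * en z) :=
      mul_le_mul_of_nonneg_left (en_mulVec_le _ _) (Real.sqrt_nonneg _)
    _ ≤ Real.sqrt (specNorm W) * (specNorm M *
        (Real.sqrt (specNorm W⁻¹) * en (hW.posSemidef.sqrt *ᵥ z))) := by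
      refine mul_le_mul_of_nonneg_left
        (mul_le_mul_of_nonneg_left (en_z_le hW z) (specNorm_nonneg _)) (Real.sqrt_nonneg _)
    _ = _ := by ring

lemma wi_bdd (hW : W.PosDef) (M : Matrix (Fin n) (Fin n) ℝ) :
    BddAbove {r : ℝ | ∃ z : Fin n → ℝ, z ≠ 0 ∧
      r = Real.sqrt ((z ⬝ᵥ (Mᵀ * W * M).mulVec z) / (z ⬝ᵥ W.mulVec z))} := by
  refine ⟨Real.sqrt (specNorm W) * specNorm M * Real.sqrt (specNorm W⁻¹), ?_⟩
  rintro r ⟨z, hz, rfl⟩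
  rw [elem_eq hW M hz, div_le_iff₀ (en_S_pos hW hz)]
  exact key_bound hW M z

lemma elem_le (hW : W.PosDef) (M : Matrix (Fin n) (Fin n) ℝ) {z : Fin n → ℝ} (hz : z ≠ 0) :
    en (hW.posSemidef.sqrt *ᵥ (M *ᵥ z)) ≤ winducedNorm W M * en (hW.posSemidef.sqrt *ᵥ z) := by
  have hmem : Real.sqrt ((z ⬝ᵥ (Mᵀ * W * M).mulVec z) / (z ⬝ᵥ W.mulVec z))
      ∈ {r : ℝ | ∃ z : Fin n → ℝ, z ≠ 0 ∧
        r = Real.sqrt ((z ⬝ᵥ (Mᵀ * W * M).mulVec z) / (z ⬝ᵥ W.mulVec z))} := ⟨z, hz, rfl⟩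
  have h := le_csSup (wi_bdd hW M) hmem
  rw [elem_eq hW M hz, div_le_iff₀ (en_S_pos hW hz)] at h
  exact h

lemma wi_nonneg (hW : W.PosDef) (hn : 0 < n) (M : Matrix (Fin n) (Fin n) ℝ) :
    0 ≤ winducedNorm W M := by
  have hz : (fun _ => (1:ℝ) : Fin n → ℝ) ≠ 0 := by
    intro h
    have := congrFun h ⟨0, hn⟩
    norm_num at this
  refine le_trans (Real.sqrt_nonneg _) (le_csSup (wi_bdd hW M) ⟨_, hz, rfl⟩)

end S
end StabCert

open StabCert

/-- Stability certificate from near-optimality: if the closed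
loop of `K*` contracts in the `W`-induced norm and `K̃` is sufficiently close to
`K*`, then the closed loop of `K̃` also contracts in the `W`-induced norm, hence
`K̃` is stabilizing. -/
theorem stability_certificate_near_optimality {n m : ℕ}
    (A : Matrix (Fin n) (Fin n) ℝ) (B : Matrix (Fin n) (Fin m) ℝ)
    (W : Matrix (Fin n) (Fin n) ℝ) (hW : W.PosDef)
    (Kstar Kt : Matrix (Fin m) (Fin n) ℝ)
    (hKstar : winducedNorm W (A - B * Kstar) < 1)
    (hclose : specNorm (Kt - Kstar) * specNorm B
        * Real.sqrt (specNorm W * specNorm W⁻¹)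
      < 1 - winducedNorm W (A - B * Kstar)) :
    winducedNorm W (A - B * Kt) < 1 ∧ specRad (A - B * Kt) < 1 := by
  rcases Nat.eq_zero_or_pos n with hn | hn
  · subst hn
    constructor
    · unfold winducedNorm
      have hset : {r : ℝ | ∃ z : Fin 0 → ℝ, z ≠ 0 ∧
          r = Real.sqrt ((z ⬝ᵥ ((A - B * Kt)ᵀ * W * (A - B * Kt)).mulVec z) /
            (z ⬝ᵥ W.mulVec z))} = ∅ := by
        refine Set.eq_empty_iff_forall_notMem.mpr ?_
        rintro r ⟨z, hz, _⟩
        exact hz (Subsingleton.elim z 0)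
      rw [hset, Real.sSup_empty]; norm_num
    · unfold specRad
      have hset : {r : ℝ | ∃ μ ∈ spectrum ℂ ((A - B * Kt).map (algebraMap ℝ ℂ)),
          r = ‖μ‖} = ∅ := by
        refine Set.eq_empty_iff_forall_notMem.mpr ?_
        rintro r ⟨μ, hμ, _⟩
        rw [spectrum.mem_iff] at hμ
        exact hμ (isUnit_of_subsingleton _)
      rw [hset, Real.sSup_empty]; norm_num
  -- main case
  set S := hW.posSemidef.sqrt with hSdef
  set α := winducedNorm W (A - B * Kstar) with hα
  set δ := specNorm (Kt - Kstar) * specNorm B * Real.sqrt (specNorm W * specNorm W⁻¹) with hδ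
  have hα0 : 0 ≤ α := wi_nonneg hW hn _
  have hδ0 : 0 ≤ δ := by
    have := specNorm_nonneg (Kt - Kstar)
    have := specNorm_nonneg B
    have := Real.sqrt_nonneg (specNorm W * specNorm W⁻¹)
    positivity
  have hswap : specNorm (Kstar - Kt) = specNorm (Kt - Kstar) := by
    rw [← specNorm_neg, neg_sub]
  have hwi1 : winducedNorm W (A - B * Kt) ≤ α + δ := by
    unfold winducedNorm
    apply Real.sSup_le
    · rintro r ⟨z, hz, rfl⟩
      rw [elem_eq hW _ hz, div_le_iff₀ (en_S_pos hW hz)]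
      have hsplit : (A - B * Kt) *ᵥ z
          = (A - B * Kstar) *ᵥ z + (B * (Kstar - Kt)) *ᵥ z := by
        rw [← add_mulVec]
        congr 1
        rw [Matrix.mul_sub]
        abel
      rw [hsplit, mulVec_add]
      refine le_trans (en_add_le _ _) ?_
      have h1 : en (S *ᵥ ((A - B * Kstar) *ᵥ z)) ≤ α * en (S *ᵥ z) := elem_le hW _ hz
      have h2 : en (S *ᵥ ((B * (Kstar - Kt)) *ᵥ z)) ≤ δ * en (S *ᵥ z) := by
        calc en (S *ᵥ ((B * (Kstar - Kt)) *ᵥ z))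
            ≤ Real.sqrt (specNorm W) * en ((B * (Kstar - Kt)) *ᵥ z) := qW_le hW _
          _ ≤ Real.sqrt (specNorm W) * (specNorm B * (specNorm (Kstar - Kt) * en z)) := by
              refine mul_le_mul_of_nonneg_left ?_ (Real.sqrt_nonneg _)
              rw [← mulVec_mulVec]
              exact le_trans (en_mulVec_le _ _)
                (mul_le_mul_of_nonneg_left (en_mulVec_le _ _) (specNorm_nonneg _))
          _ ≤ Real.sqrt (specNorm W) * (specNorm B * (specNorm (Kstar - Kt) *
                (Real.sqrt (specNorm W⁻¹) * en (S *ᵥ z)))) := by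
              refine mul_le_mul_of_nonneg_left (mul_le_mul_of_nonneg_left
                (mul_le_mul_of_nonneg_left (en_z_le hW z) (specNorm_nonneg _))
                (specNorm_nonneg _)) (Real.sqrt_nonneg _)
          _ = δ * en (S *ᵥ z) := by
              rw [hδ, hswap, Real.sqrt_mul (specNorm_nonneg W)]
              ring
      rw [add_mul]
      exact add_le_add h1 h2
    · linarith
  have hwilt : winducedNorm W (A - B * Kt) < 1 := lt_of_le_of_lt hwi1 (by linarith)
  refine ⟨hwilt, ?_⟩
  set β := winducedNorm W (A - B * Kt) with hβ
  have hβ0 : 0 ≤ β := wi_nonneg hW hn _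
  set M := A - B * Kt with hM
  -- quadratic contraction for every real vector
  have hcontr : ∀ z : Fin n → ℝ, en (S *ᵥ (M *ᵥ z)) ^ 2 ≤ β ^ 2 * en (S *ᵥ z) ^ 2 := by
    intro z
    by_cases hz : z = 0
    · subst hz; simp [en, mulVec_zero]
    · have h := elem_le hW M hz
      have h2 := pow_le_pow_left₀ (en_nonneg _) h 2
      calc en (S *ᵥ (M *ᵥ z)) ^ 2 ≤ (β * en (S *ᵥ z)) ^ 2 := h2
        _ = β ^ 2 * en (S *ᵥ z) ^ 2 := by ring
  unfold specRad
  apply Real.sSup_le _ hβ0 |>.trans_lt hwilt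
  rintro r ⟨μ, hμ, rfl⟩
  -- eigenvector
  rw [spectrum.mem_iff] at hμ
  have hdet : (algebraMap ℂ (Matrix (Fin n) (Fin n) ℂ) μ - M.map (algebraMap ℝ ℂ)).det = 0 := by
    by_contra h
    exact hμ ((Matrix.isUnit_iff_isUnit_det _).mpr (isUnit_iff_ne_zero.mpr h))
  obtain ⟨v, hv, hv0⟩ := (Matrix.exists_mulVec_eq_zero_iff).mpr hdet
  have hev : (M.map (algebraMap ℝ ℂ)) *ᵥ v = μ • v := by
    rw [Matrix.sub_mulVec] at hv0
    have h1 := sub_eq_zero.mp hv0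
    rw [← h1, Algebra.algebraMap_eq_smul_one, smul_mulVec, one_mulVec]
  have hcomp : ∀ i, (∑ j, (M i j : ℂ) * v j) = μ * v i := by
    intro i
    have h := congrFun hev i
    simpa [Matrix.mulVec, dotProduct, Matrix.map_apply, Pi.smul_apply, smul_eq_mul] using h
  set x : Fin n → ℝ := fun i => (v i).re with hxdef
  set y : Fin n → ℝ := fun i => (v i).im with hydef
  have hx : M *ᵥ x = μ.re • x - μ.im • y := by
    funext i
    have h := congrArg Complex.re (hcomp i)
    rw [Complex.re_sum] at h
    simp only [Complex.mul_re, Complex.ofReal_re, Complex.ofReal_im, zero_mul, sub_zero] at h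
    simp only [Matrix.mulVec, dotProduct, Pi.sub_apply, Pi.smul_apply, smul_eq_mul, hxdef, hydef]
    linarith [h]
  have hy : M *ᵥ y = μ.im • x + μ.re • y := by
    funext i
    have h := congrArg Complex.im (hcomp i)
    rw [Complex.im_sum] at h
    simp only [Complex.mul_im, Complex.ofReal_re, Complex.ofReal_im, zero_mul, add_zero] at h
    simp only [Matrix.mulVec, dotProduct, Pi.add_apply, Pi.smul_apply, smul_eq_mul, hxdef, hydef]
    linarith [h]
  set a := S *ᵥ x with hadef
  set b := S *ᵥ y with hbdef
  have hpa : S *ᵥ (M *ᵥ x) = μ.re • a - μ.im • b := by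
    rw [hx, Matrix.mulVec_sub, Matrix.mulVec_smul, Matrix.mulVec_smul]
  have hpb : S *ᵥ (M *ᵥ y) = μ.im • a + μ.re • b := by
    rw [hy, Matrix.mulVec_add, Matrix.mulVec_smul, Matrix.mulVec_smul]
  have hsq1 : en (S *ᵥ (M *ᵥ x)) ^ 2
      = μ.re ^ 2 * (a ⬝ᵥ a) - 2 * μ.re * μ.im * (a ⬝ᵥ b) + μ.im ^ 2 * (b ⬝ᵥ b) := by
    rw [en_sq, hpa]
    simp only [dotProduct_sub, sub_dotProduct, dotProduct_smul, smul_dotProduct, smul_eq_mul,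
      dotProduct_comm b a]
    ring
  have hsq2 : en (S *ᵥ (M *ᵥ y)) ^ 2
      = μ.im ^ 2 * (a ⬝ᵥ a) + 2 * μ.re * μ.im * (a ⬝ᵥ b) + μ.re ^ 2 * (b ⬝ᵥ b) := by
    rw [en_sq, hpb]
    simp only [dotProduct_add, add_dotProduct, dotProduct_smul, smul_dotProduct, smul_eq_mul,
      dotProduct_comm b a]
    ring
  have h1 := hcontr x
  have h2 := hcontr y
  rw [hsq1] at h1
  rw [hsq2] at h2
  rw [en_sq] at h1 h2
  -- a ⬝ᵥ a + b ⬝ᵥ b > 0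
  have hxy : x ≠ 0 ∨ y ≠ 0 := by
    by_contra h
    push_neg at h
    apply hv
    funext i
    have h1 := congrFun h.1 i
    have h2 := congrFun h.2 i
    exact Complex.ext h1 h2
  have dp_pos : ∀ {w : Fin n → ℝ}, w ≠ 0 → 0 < w ⬝ᵥ w := by
    intro w hw
    have h := en_pos hw
    rwa [en, Real.sqrt_pos] at h
  have hab : 0 < a ⬝ᵥ a + b ⬝ᵥ b := by
    rcases hxy with h0 | h0
    · have ha : a ≠ 0 := fun hc => h0 (sqrt_ker hW hc)
      have := dp_pos ha
      have := dp_self_nonneg b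
      linarith
    · have hb : b ≠ 0 := fun hc => h0 (sqrt_ker hW hc)
      have := dp_pos hb
      have := dp_self_nonneg a
      linarith
  have hkey : μ.re ^ 2 + μ.im ^ 2 ≤ β ^ 2 := by nlinarith
  have habs : ‖μ‖ ^ 2 = μ.re ^ 2 + μ.im ^ 2 := by
    rw [Complex.sq_norm, Complex.normSq_apply]; ring
  nlinarith [norm_nonneg μ, hβ0]
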